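/- Fix a skew shape λ/μ, m ≥ 2, and i ∈ [m−1]. Every descent-resolution step applied to a benign tableau preserves the height vector. Consequently, for every reverse plane partition T of shape λ/μ with entries in [m] with f_i(T) ≠ 0 (respectively e_i(T) ≠ 0), one has h(f_i(T)) = h(T) and ceq(f_i(T)) = ceq(T) (respectively h(e_i(T)) = h(T) and ceq(e_i(T)) = ceq(T)). -/

import Mathlib

/-! ### Crystal operators on words -/

/-- The number of `i`'s minus the number of `(i+1)`'s among the first `k` letters of `w`
(viewing each `i` as a closing parenthesis and each `i+1` as an opening parenthesis). -/
def prefD (i : ℕ) (w : List ℕ) (k : ℕ) : ℤ :=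
  ((w.take k).count i : ℤ) - ((w.take k).count (i + 1) : ℤ)

/-- The number of `(i+1)`'s minus the number of `i`'s in the suffix of `w` starting at
position `k`. -/
def suffD (i : ℕ) (w : List ℕ) (k : ℕ) : ℤ :=
  ((w.drop k).count (i + 1) : ℤ) - ((w.drop k).count i : ℤ)

/-- Position `p` of `w` holds a letter `i` which, viewed as a closing parenthesis
(each `i+1` being an opening parenthesis, all other letters ignored), is unmatched in the
usual parenthesis matching. -/
def IsUnmatchedClose (i : ℕ) (w : List ℕ) (p : ℕ) : Prop :=
  w[p]? = some i ∧ ∀ q ≤ p, prefD i w q < prefD i w (p + 1)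

/-- Position `p` of `w` holds a letter `i+1` which, viewed as an opening parenthesis
(each `i` being a closing parenthesis, all other letters ignored), is unmatched in the
usual parenthesis matching. -/
def IsUnmatchedOpen (i : ℕ) (w : List ℕ) (p : ℕ) : Prop :=
  w[p]? = some (i + 1) ∧ ∀ q ≤ w.length, p < q → suffD i w q < suffD i w p

instance (i : ℕ) (w : List ℕ) (p : ℕ) : Decidable (IsUnmatchedClose i w p) := by
  unfold IsUnmatchedClose; infer_instance

instance (i : ℕ) (w : List ℕ) (p : ℕ) : Decidable (IsUnmatchedOpen i w p) := by
  unfold IsUnmatchedOpen; infer_instance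

/-- The (increasing) list of positions of unmatched `i`'s (closing parentheses) of `w`. -/
def unmatchedCloses (i : ℕ) (w : List ℕ) : List ℕ :=
  (List.range w.length).filter fun p => decide (IsUnmatchedClose i w p)

/-- The (increasing) list of positions of unmatched `(i+1)`'s (opening parentheses) of `w`. -/
def unmatchedOpens (i : ℕ) (w : List ℕ) : List ℕ :=
  (List.range w.length).filter fun p => decide (IsUnmatchedOpen i w p)

/-- The crystal operator `F_i` on words: replace the rightmost unmatched `i` by `i+1`;
`none` (i.e. `0`) if every `i` is matched. -/
def Fop (i : ℕ) (w : List ℕ) : Option (List ℕ) :=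
  match (unmatchedCloses i w).getLast? with
  | none => none
  | some p => some (w.set p (i + 1))

/-- The crystal operator `E_i` on words: replace the leftmost unmatched `i+1` by `i`;
`none` (i.e. `0`) if every `i+1` is matched. -/
def Eop (i : ℕ) (w : List ℕ) : Option (List ℕ) :=
  match (unmatchedOpens i w).head? with
  | none => none
  | some p => some (w.set p i)

/-- `s` is a string over the alphabet `{1, …, m}`. -/
def IsWordOver (m : ℕ) (s : List ℕ) : Prop := ∀ x ∈ s, 1 ≤ x ∧ x ≤ m

/-! ### Skew shapes and reverse plane partitions -/

/-- `(r, c)` is a cell of the skew shape `lam / mu` (matrix convention: `r` = row index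
counted from the top, `c` = column index, both 0-based). -/
def IsSkewCell (lam mu : YoungDiagram) (r c : ℕ) : Prop :=
  (r, c) ∈ lam.cells ∧ (r, c) ∉ mu.cells

instance (lam mu : YoungDiagram) (r c : ℕ) : Decidable (IsSkewCell lam mu r c) := by
  unfold IsSkewCell; infer_instance

/-- `T` is a reverse plane partition of shape `lam / mu` with entries in `{1, …, m}`:
entries weakly increase along rows and columns; `T` is normalized to be `0` outside the
shape. -/
def IsSkewRPP (lam mu : YoungDiagram) (m : ℕ) (T : ℕ → ℕ → ℕ) : Prop :=
  (∀ r c, ¬ IsSkewCell lam mu r c → T r c = 0) ∧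
  (∀ r c, IsSkewCell lam mu r c → 1 ≤ T r c ∧ T r c ≤ m) ∧
  (∀ r c, IsSkewCell lam mu r c → IsSkewCell lam mu r (c + 1) → T r c ≤ T r (c + 1)) ∧
  (∀ r c, IsSkewCell lam mu r c → IsSkewCell lam mu (r + 1) c → T r c ≤ T (r + 1) c)

/-- The reading word of `T`: ignore each entry equal to the entry directly below it, and read
the remaining entries left-to-right, bottom-to-top. -/
def readingWord (lam mu : YoungDiagram) (T : ℕ → ℕ → ℕ) : List ℕ :=
  ((List.range (lam.colLen 0)).reverse).flatMap fun r =>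
    ((List.range (lam.rowLen r)).filter fun c =>
      decide (IsSkewCell lam mu r c) &&
        ! (decide (IsSkewCell lam mu (r + 1) c) && decide (T (r + 1) c = T r c))).map (T r)

/-- The height vector of `T`: the sequence of (1-based) row indices of the entries of `T`
contributing to the reading word, in reading order. -/
def heightWord (lam mu : YoungDiagram) (T : ℕ → ℕ → ℕ) : List ℕ :=
  ((List.range (lam.colLen 0)).reverse).flatMap fun r =>
    ((List.range (lam.rowLen r)).filter fun c =>
      decide (IsSkewCell lam mu r c) &&
        ! (decide (IsSkewCell lam mu (r + 1) c) && decide (T (r + 1) c = T r c))).map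
      fun _ => r + 1

/-! ### Columns, descents and descent-resolution -/

/-- Column `c` of the tableau `T` (of shape `lam/mu`) contains an entry equal to `v`. -/
def ColHasVal (lam mu : YoungDiagram) (T : ℕ → ℕ → ℕ) (c v : ℕ) : Prop :=
  ∃ r ∈ Finset.range (lam.colLen c), IsSkewCell lam mu r c ∧ T r c = v

instance (lam mu : YoungDiagram) (T : ℕ → ℕ → ℕ) (c v : ℕ) :
    Decidable (ColHasVal lam mu T c v) := by
  unfold ColHasVal; infer_instance

/-- Column `c` is `i`-pure: it contains an `i` but no `i+1`. -/
def IsPureLow (i : ℕ) (lam mu : YoungDiagram) (T : ℕ → ℕ → ℕ) (c : ℕ) : Prop :=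
  ColHasVal lam mu T c i ∧ ¬ ColHasVal lam mu T c (i + 1)

/-- Column `c` is `(i+1)`-pure: it contains an `i+1` but no `i`. -/
def IsPureHigh (i : ℕ) (lam mu : YoungDiagram) (T : ℕ → ℕ → ℕ) (c : ℕ) : Prop :=
  ColHasVal lam mu T c (i + 1) ∧ ¬ ColHasVal lam mu T c i

/-- Column `c` is mixed: it contains both an `i` and an `i+1`. -/
def IsMixedCol (i : ℕ) (lam mu : YoungDiagram) (T : ℕ → ℕ → ℕ) (c : ℕ) : Prop :=
  ColHasVal lam mu T c i ∧ ColHasVal lam mu T c (i + 1)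

instance (i : ℕ) (lam mu : YoungDiagram) (T : ℕ → ℕ → ℕ) (c : ℕ) :
    Decidable (IsPureLow i lam mu T c) := by unfold IsPureLow; infer_instance
instance (i : ℕ) (lam mu : YoungDiagram) (T : ℕ → ℕ → ℕ) (c : ℕ) :
    Decidable (IsPureHigh i lam mu T c) := by unfold IsPureHigh; infer_instance

/-- The (0-based) row index of the lowest `i` in column `c`. -/
noncomputable def lowestLow (i : ℕ) (lam mu : YoungDiagram) (T : ℕ → ℕ → ℕ) (c : ℕ) : ℕ :=
  sSup {r | IsSkewCell lam mu r c ∧ T r c = i}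

/-- A descent: the box `(r, c)` contains `i+1` and the box directly to its right contains
`i`. -/
def IsDescent (i : ℕ) (lam mu : YoungDiagram) (T : ℕ → ℕ → ℕ) (r c : ℕ) : Prop :=
  IsSkewCell lam mu r c ∧ IsSkewCell lam mu r (c + 1) ∧ T r c = i + 1 ∧ T r (c + 1) = i

/-- `T` has no descents (for the letters `i`, `i+1`). -/
def NoDescent (i : ℕ) (lam mu : YoungDiagram) (T : ℕ → ℕ → ℕ) : Prop :=
  ∀ r c, ¬ IsDescent i lam mu T r c

/-- The value `v` is `i` or `i+1`. -/
def InBand (i v : ℕ) : Prop := v = i ∨ v = i + 1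

/-- A benign tableau (for the letter `i`): it is `0` outside the shape, all its entries in the
shape are `i` or `i+1`, its entries weakly increase in columns, and for any two mixed columns
`a` (to the left) and `b` (to the right), the lowest `i` of `a` is not in a higher row than
the lowest `i` of `b`. -/
def IsBenign (i : ℕ) (lam mu : YoungDiagram) (T : ℕ → ℕ → ℕ) : Prop :=
  (∀ r c, ¬ IsSkewCell lam mu r c → T r c = 0) ∧
  (∀ r c, IsSkewCell lam mu r c → T r c = i ∨ T r c = i + 1) ∧
  (∀ r c, IsSkewCell lam mu r c → IsSkewCell lam mu (r + 1) c → T r c ≤ T (r + 1) c) ∧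
  (∀ a b, a < b → IsMixedCol i lam mu T a → IsMixedCol i lam mu T b →
    lowestLow i lam mu T a ≤ lowestLow i lam mu T b)

/-- A descent-resolution step at columns `c, c+1` changes no entry outside these two columns,
and no entry whose value is not `i` or `i+1`. -/
def StepFrame (i : ℕ) (lam mu : YoungDiagram) (T T' : ℕ → ℕ → ℕ) (c : ℕ) : Prop :=
  ∀ r c', (¬ (c' = c ∨ c' = c + 1) ∨ ¬ (IsSkewCell lam mu r c' ∧ InBand i (T r c'))) →
    T' r c' = T r c'

/-- Descent-resolution step of type (2M): column `c` is `(i+1)`-pure, column `c+1` is mixed,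
and there is a descent between them; column `c` becomes mixed with its lowest `i` in the same
row as the lowest `i` of column `c+1`, and column `c+1` becomes `(i+1)`-pure. -/
def Step2M (i : ℕ) (lam mu : YoungDiagram) (T T' : ℕ → ℕ → ℕ) (c : ℕ) : Prop :=
  IsPureHigh i lam mu T c ∧ IsMixedCol i lam mu T (c + 1) ∧
  (∃ r, IsDescent i lam mu T r c) ∧ StepFrame i lam mu T T' c ∧
  (∀ r, IsSkewCell lam mu r c → InBand i (T r c) →
    T' r c = if r ≤ lowestLow i lam mu T (c + 1) then i else i + 1) ∧
  (∀ r, IsSkewCell lam mu r (c + 1) → InBand i (T r (c + 1)) → T' r (c + 1) = i + 1)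

/-- Descent-resolution step of type (M1): column `c` is mixed, column `c+1` is `i`-pure,
and there is a descent between them; column `c` becomes `i`-pure, and column `c+1` becomes
mixed with its lowest `i` in the same row as the lowest `i` of column `c`. -/
def StepM1 (i : ℕ) (lam mu : YoungDiagram) (T T' : ℕ → ℕ → ℕ) (c : ℕ) : Prop :=
  IsMixedCol i lam mu T c ∧ IsPureLow i lam mu T (c + 1) ∧
  (∃ r, IsDescent i lam mu T r c) ∧ StepFrame i lam mu T T' c ∧
  (∀ r, IsSkewCell lam mu r c → InBand i (T r c) → T' r c = i) ∧
  (∀ r, IsSkewCell lam mu r (c + 1) → InBand i (T r (c + 1)) →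
    T' r (c + 1) = if r ≤ lowestLow i lam mu T c then i else i + 1)

/-- Descent-resolution step of type (21): column `c` is `(i+1)`-pure, column `c+1` is
`i`-pure, and there is a descent between them; all `i`'s are replaced by `(i+1)`'s and vice
versa in both columns. -/
def Step21 (i : ℕ) (lam mu : YoungDiagram) (T T' : ℕ → ℕ → ℕ) (c : ℕ) : Prop :=
  IsPureHigh i lam mu T c ∧ IsPureLow i lam mu T (c + 1) ∧
  (∃ r, IsDescent i lam mu T r c) ∧ StepFrame i lam mu T T' c ∧
  (∀ r, IsSkewCell lam mu r c → InBand i (T r c) → T' r c = i) ∧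
  (∀ r, IsSkewCell lam mu r (c + 1) → InBand i (T r (c + 1)) → T' r (c + 1) = i + 1)

/-- A descent-resolution step: a step of one of the three types, at some pair of adjacent
columns. -/
def DRStep (i : ℕ) (lam mu : YoungDiagram) (T T' : ℕ → ℕ → ℕ) : Prop :=
  ∃ c, Step2M i lam mu T T' c ∨ StepM1 i lam mu T T' c ∨ Step21 i lam mu T T' c

/-! ### The crystal operators `f_i`, `e_i` on reverse plane partitions -/

/-- The list of pure columns (for the letters `i`, `i+1`), in left-to-right order. -/
def pureCols (i : ℕ) (lam mu : YoungDiagram) (T : ℕ → ℕ → ℕ) : List ℕ :=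
  (List.range (lam.rowLen 0)).filter fun c =>
    decide (IsPureLow i lam mu T c) || decide (IsPureHigh i lam mu T c)

/-- The parenthesis word of the pure columns: each `i`-pure column contributes the letter `i`
(a closing parenthesis) and each `(i+1)`-pure column the letter `i+1` (an opening one). -/
def colWord (i : ℕ) (lam mu : YoungDiagram) (T : ℕ → ℕ → ℕ) : List ℕ :=
  (pureCols i lam mu T).map fun c => if IsPureLow i lam mu T c then i else i + 1

/-- Replace all `i`'s by `(i+1)`'s in column `c`. -/
def raiseCol (i : ℕ) (lam mu : YoungDiagram) (T : ℕ → ℕ → ℕ) (c : ℕ) : ℕ → ℕ → ℕ :=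
  fun r c' => if c' = c ∧ IsSkewCell lam mu r c' ∧ T r c' = i then i + 1 else T r c'

/-- Replace all `(i+1)`'s by `i`'s in column `c`. -/
def lowerCol (i : ℕ) (lam mu : YoungDiagram) (T : ℕ → ℕ → ℕ) (c : ℕ) : ℕ → ℕ → ℕ :=
  fun r c' => if c' = c ∧ IsSkewCell lam mu r c' ∧ T r c' = i + 1 then i else T r c'

/-- `T' = f_i(T)`: the column `c` carrying the rightmost unmatched closing parenthesis (in the
parenthesation of the pure columns) has all its `i`'s replaced by `(i+1)`'s, and then the
descent-resolution algorithm is applied (i.e. descent-resolution steps are performed until no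
descent remains, reaching `T'`). -/
def fiRel (i : ℕ) (lam mu : YoungDiagram) (T T' : ℕ → ℕ → ℕ) : Prop :=
  ∃ p c, (unmatchedCloses i (colWord i lam mu T)).getLast? = some p ∧
    (pureCols i lam mu T)[p]? = some c ∧
    Relation.ReflTransGen (DRStep i lam mu) (raiseCol i lam mu T c) T' ∧
    NoDescent i lam mu T'

/-- `f_i(T) = 0`: every closing parenthesis (i.e. every `i`-pure column) is matched. -/
def fiZero (i : ℕ) (lam mu : YoungDiagram) (T : ℕ → ℕ → ℕ) : Prop :=
  unmatchedCloses i (colWord i lam mu T) = []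

/-- `T' = e_i(T)`: the column `c` carrying the leftmost unmatched opening parenthesis (in the
parenthesation of the pure columns) has all its `(i+1)`'s replaced by `i`'s, and then the
descent-resolution algorithm is applied. -/
def eiRel (i : ℕ) (lam mu : YoungDiagram) (T T' : ℕ → ℕ → ℕ) : Prop :=
  ∃ p c, (unmatchedOpens i (colWord i lam mu T)).head? = some p ∧
    (pureCols i lam mu T)[p]? = some c ∧
    Relation.ReflTransGen (DRStep i lam mu) (lowerCol i lam mu T c) T' ∧
    NoDescent i lam mu T'

/-- `e_i(T) = 0`: every opening parenthesis (i.e. every `(i+1)`-pure column) is matched. -/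
def eiZero (i : ℕ) (lam mu : YoungDiagram) (T : ℕ → ℕ → ℕ) : Prop :=
  unmatchedOpens i (colWord i lam mu T) = []

/-- The `ceq` statistic of `T`, as a weak composition `(c_1, c_2, …)` (with `ceqF … 0 = 0`):
its `i`-th entry (`i ≥ 1`, corresponding to 0-based rows `i-1` and `i`) is the number of
columns `c` such that the boxes `(i-1, c)` and `(i, c)` (0-based) both belong to `lam/mu`
and the entries of `T` in them are equal. -/
noncomputable def ceqF (lam mu : YoungDiagram) (T : ℕ → ℕ → ℕ) : ℕ → ℕ
  | 0 => 0
  | k + 1 =>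
    Nat.card {c : ℕ // IsSkewCell lam mu k c ∧ IsSkewCell lam mu (k + 1) c ∧
      T k c = T (k + 1) c}

section AuxDev

variable {lam mu : YoungDiagram} {i : ℕ}

/-- Vertical-equality predicate: matches the `ceqF` condition. -/
def EPred (lam mu : YoungDiagram) (S : ℕ → ℕ → ℕ) (r d : ℕ) : Prop :=
  IsSkewCell lam mu r d ∧ IsSkewCell lam mu (r + 1) d ∧ S r d = S (r + 1) d

/-- Invariant preserved by the descent-resolution algorithm. -/
def Qinv (i : ℕ) (lam mu : YoungDiagram) (S : ℕ → ℕ → ℕ) : Prop :=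
  (∀ r d, IsSkewCell lam mu r d → IsSkewCell lam mu (r + 1) d → S r d ≤ S (r + 1) d) ∧
  (∀ r d, IsSkewCell lam mu r d → IsSkewCell lam mu r (d + 1) →
    S r d ≤ S r (d + 1) ∨ (S r d = i + 1 ∧ S r (d + 1) = i))

/-- How the vertical-equality pattern changes in one step: either everywhere preserved, or
preserved except at one row where columns `c`, `c+1` are exchanged. -/
def EDesc (lam mu : YoungDiagram) (S S' : ℕ → ℕ → ℕ) : Prop :=
  (∀ r d, EPred lam mu S' r d ↔ EPred lam mu S r d) ∨
  ∃ ρ c, IsSkewCell lam mu ρ c ∧ IsSkewCell lam mu ρ (c + 1) ∧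
    (∀ r d, r ≠ ρ → (EPred lam mu S' r d ↔ EPred lam mu S r d)) ∧
    (∀ d, d ≠ c → d ≠ c + 1 → (EPred lam mu S' ρ d ↔ EPred lam mu S ρ d)) ∧
    (EPred lam mu S' ρ c ↔ EPred lam mu S ρ (c + 1)) ∧
    (EPred lam mu S' ρ (c + 1) ↔ EPred lam mu S ρ c)

lemma cell_between {r₁ r₂ t c : ℕ} (h₁ : IsSkewCell lam mu r₁ c) (h₂ : IsSkewCell lam mu r₂ c)
    (ht₁ : r₁ ≤ t) (ht₂ : t ≤ r₂) : IsSkewCell lam mu t c :=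
  ⟨(YoungDiagram.mem_cells _).mpr (lam.up_left_mem ht₂ le_rfl ((YoungDiagram.mem_cells _).mp h₂.1)),
   fun hm => h₁.2 ((YoungDiagram.mem_cells _).mpr
     (mu.up_left_mem ht₁ le_rfl ((YoungDiagram.mem_cells _).mp hm)))⟩

lemma cell_left {r r' c : ℕ} (h : IsSkewCell lam mu r (c + 1)) (h' : IsSkewCell lam mu r' c)
    (hr : r' ≤ r) : IsSkewCell lam mu r c :=
  ⟨(YoungDiagram.mem_cells _).mpr (lam.up_left_mem le_rfl (Nat.le_succ c)
      ((YoungDiagram.mem_cells _).mp h.1)),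
   fun hm => h'.2 ((YoungDiagram.mem_cells _).mpr
     (mu.up_left_mem hr le_rfl ((YoungDiagram.mem_cells _).mp hm)))⟩

lemma cell_right {r r' c : ℕ} (h : IsSkewCell lam mu r (c + 1)) (h' : IsSkewCell lam mu r' c)
    (hr : r' ≤ r) : IsSkewCell lam mu r' (c + 1) :=
  ⟨(YoungDiagram.mem_cells _).mpr (lam.up_left_mem hr le_rfl ((YoungDiagram.mem_cells _).mp h.1)),
   fun hm => h'.2 ((YoungDiagram.mem_cells _).mpr
     (mu.up_left_mem le_rfl (Nat.le_succ c) ((YoungDiagram.mem_cells _).mp hm)))⟩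

lemma val_mono {S : ℕ → ℕ → ℕ}
    (hQ : ∀ r d, IsSkewCell lam mu r d → IsSkewCell lam mu (r + 1) d → S r d ≤ S (r + 1) d)
    {r₁ r₂ c : ℕ} (h₁ : IsSkewCell lam mu r₁ c) (h₂ : IsSkewCell lam mu r₂ c) (h : r₁ ≤ r₂) :
    S r₁ c ≤ S r₂ c := by
  induction r₂, h using Nat.le_induction with
  | base => exact le_rfl
  | succ n hn ih =>
      have hc : IsSkewCell lam mu n c := cell_between h₁ h₂ hn (Nat.le_succ n)
      exact (ih hc).trans (hQ n c hc h₂)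

lemma colHasVal_iff {S : ℕ → ℕ → ℕ} {d v : ℕ} :
    ColHasVal lam mu S d v ↔ ∃ r, IsSkewCell lam mu r d ∧ S r d = v := by
  constructor
  · rintro ⟨r, -, hc, hv⟩; exact ⟨r, hc, hv⟩
  · rintro ⟨r, hc, hv⟩
    exact ⟨r, Finset.mem_range.mpr (YoungDiagram.mem_iff_lt_colLen.mp
      ((YoungDiagram.mem_cells _).mp hc.1)), hc, hv⟩

lemma lowestLow_spec {S : ℕ → ℕ → ℕ} {d : ℕ} (h : ColHasVal lam mu S d i) :
    (IsSkewCell lam mu (lowestLow i lam mu S d) d ∧ S (lowestLow i lam mu S d) d = i) ∧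
    ∀ r, IsSkewCell lam mu r d → S r d = i → r ≤ lowestLow i lam mu S d := by
  have hbdd : BddAbove {r | IsSkewCell lam mu r d ∧ S r d = i} :=
    ⟨lam.colLen d, fun r hr =>
      (YoungDiagram.mem_iff_lt_colLen.mp ((YoungDiagram.mem_cells _).mp hr.1.1)).le⟩
  obtain ⟨r, hc, hv⟩ := colHasVal_iff.mp h
  unfold lowestLow
  exact ⟨Nat.sSup_mem ⟨r, show IsSkewCell lam mu r d ∧ S r d = i from ⟨hc, hv⟩⟩ hbdd,
    fun r' hc' hv' => le_csSup hbdd (show IsSkewCell lam mu r' d ∧ S r' d = i from ⟨hc', hv'⟩)⟩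

lemma EPred_congr {S S' : ℕ → ℕ → ℕ} {r d : ℕ}
    (h : IsSkewCell lam mu r d → IsSkewCell lam mu (r + 1) d →
      (S' r d = S' (r + 1) d ↔ S r d = S (r + 1) d)) :
    EPred lam mu S' r d ↔ EPred lam mu S r d := by
  unfold EPred
  by_cases h1 : IsSkewCell lam mu r d
  · by_cases h2 : IsSkewCell lam mu (r + 1) d
    · simp [h1, h2, h h1 h2]
    · simp [h2]
  · simp [h1]

end AuxDev

section StepDev

variable {lam mu : YoungDiagram} {i : ℕ}

lemma step2M_main {S S' : ℕ → ℕ → ℕ} {c : ℕ} (hQ : Qinv i lam mu S)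
    (hs : Step2M i lam mu S S' c) : Qinv i lam mu S' ∧ EDesc lam mu S S' := by
  obtain ⟨hph, hmx, ⟨r₀, hd1, hd2, hd3, hd4⟩, hframe, hrwc, hrwc1⟩ := hs
  obtain ⟨hQc, hQr⟩ := hQ
  have hfrO : ∀ r d, d ≠ c → d ≠ c + 1 → S' r d = S r d := fun r d h1 h2 =>
    hframe r d (Or.inl (by rintro (rfl | rfl); exacts [h1 rfl, h2 rfl]))
  have hfrB : ∀ r d, ¬ InBand i (S r d) → S' r d = S r d := fun r d h =>
    hframe r d (Or.inr fun hh => h hh.2)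
  obtain ⟨⟨hLcell, hLval⟩, hLmax⟩ := lowestLow_spec (i := i) hmx.1
  set L := lowestLow i lam mu S (c + 1) with hLdef
  have hr₀L : r₀ ≤ L := hLmax r₀ hd2 hd4
  obtain ⟨r₂, h2c, h2v⟩ := colHasVal_iff.mp hmx.2
  have hLr₂ : L < r₂ := by
    by_contra hcon; push_neg at hcon
    have := val_mono hQc h2c hLcell hcon; omega
  have hL1c1 : IsSkewCell lam mu (L + 1) (c + 1) := cell_between hLcell h2c (Nat.le_succ L) hLr₂
  have hvL1c1 : S (L + 1) (c + 1) = i + 1 := by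
    have hle := val_mono hQc hL1c1 h2c hLr₂
    have hge := hQc L (c + 1) hLcell hL1c1
    have hne : S (L + 1) (c + 1) ≠ i := fun hh => by have := hLmax _ hL1c1 hh; omega
    omega
  have hLc : IsSkewCell lam mu L c := cell_left hLcell hd1 hr₀L
  have hL1c : IsSkewCell lam mu (L + 1) c := cell_left hL1c1 hd1 (by omega)
  have hvLc : S L c = i + 1 := by
    have h1 := val_mono hQc hd1 hLc hr₀L
    rcases hQr L c hLc hLcell with h | h
    · omega
    · exact h.1
  have hvL1c : S (L + 1) c = i + 1 := by
    have h1 := hQc L c hLc hL1c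
    rcases hQr (L + 1) c hL1c hL1c1 with h | h <;> omega
  have hnoi : ∀ r, IsSkewCell lam mu r c → S r c ≠ i := fun r hc hv =>
    hph.2 (colHasVal_iff.mpr ⟨r, hc, hv⟩)
  have hbandc : ∀ r, IsSkewCell lam mu r c → InBand i (S r c) → S r c = i + 1 := by
    intro r hc hb
    rcases hb with h | h
    · exact absurd h (hnoi r hc)
    · exact h
  have hbandc1 : ∀ r, IsSkewCell lam mu r (c + 1) → InBand i (S r (c + 1)) →
      S r (c + 1) = if r ≤ L then i else i + 1 := by
    intro r hc hb
    split_ifs with hr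
    · have := val_mono hQc hc hLcell hr
      rcases hb with h | h
      · exact h
      · omega
    · rcases hb with h | h
      · exact absurd (hLmax r hc h) hr
      · exact h
  have hQ' : Qinv i lam mu S' := by
    constructor
    · intro r d hc hc'
      rcases eq_or_ne c d with rfl | hdc
      · by_cases hb1 : InBand i (S r c) <;> by_cases hb2 : InBand i (S (r + 1) c)
        · rw [hrwc r hc hb1, hrwc _ hc' hb2]; split_ifs <;> omega
        · have e1 := hrwc r hc hb1
          have e2 := hfrB (r + 1) c hb2
          have h3 := hbandc r hc hb1
          have h4 := hQc r c hc hc'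
          unfold InBand at hb2
          split_ifs at e1 <;> omega
        · have e2 := hrwc _ hc' hb2
          have e1 := hfrB r c hb1
          have h3 := hbandc _ hc' hb2
          have h4 := hQc r c hc hc'
          unfold InBand at hb1
          split_ifs at e2 <;> omega
        · rw [hfrB r c hb1, hfrB (r + 1) c hb2]; exact hQc r c hc hc'
      rcases eq_or_ne d (c + 1) with rfl | hdc1
      · by_cases hb1 : InBand i (S r (c + 1)) <;> by_cases hb2 : InBand i (S (r + 1) (c + 1))
        · rw [hrwc1 r hc hb1, hrwc1 _ hc' hb2]
        · have e1 := hrwc1 r hc hb1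
          have e2 := hfrB (r + 1) (c + 1) hb2
          have h3 := hbandc1 r hc hb1
          have h4 := hQc r (c + 1) hc hc'
          unfold InBand at hb2
          split_ifs at h3 <;> omega
        · have e2 := hrwc1 _ hc' hb2
          have e1 := hfrB r (c + 1) hb1
          have h3 := hbandc1 _ hc' hb2
          have h4 := hQc r (c + 1) hc hc'
          unfold InBand at hb1
          split_ifs at h3 <;> omega
        · rw [hfrB r (c + 1) hb1, hfrB (r + 1) (c + 1) hb2]; exact hQc r (c + 1) hc hc'
      · rw [hfrO r d hdc.symm hdc1, hfrO (r + 1) d hdc.symm hdc1]; exact hQc r d hc hc'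
    · intro r d hc hc'
      rcases eq_or_ne c d with rfl | hdc
      · by_cases hb1 : InBand i (S r c)
        · have e1 := hrwc r hc hb1
          have hx := hbandc r hc hb1
          by_cases hb2 : InBand i (S r (c + 1))
          · have e2 := hrwc1 r hc' hb2
            left; split_ifs at e1 <;> omega
          · have e2 := hfrB r (c + 1) hb2
            have hold := hQr r c hc hc'
            unfold InBand at hb2
            left; split_ifs at e1 <;> omega
        · have e1 := hfrB r c hb1
          by_cases hb2 : InBand i (S r (c + 1))
          · have e2 := hrwc1 r hc' hb2
            have hold := hQr r c hc hc'
            have hb2' := hb2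
            unfold InBand at hb2' hb1
            left; omega
          · rw [e1, hfrB r (c + 1) hb2]; exact hQr r c hc hc'
      rcases eq_or_ne d (c + 1) with rfl | hdc1
      · have e2 : S' r (c + 1 + 1) = S r (c + 1 + 1) := hfrO r (c + 2) (by omega) (by omega)
        by_cases hb1 : InBand i (S r (c + 1))
        · have e1 := hrwc1 r hc hb1
          have hold := hQr r (c + 1) hc hc'
          have hx := hbandc1 r hc hb1
          rw [e1, e2]
          split_ifs at hx <;> omega
        · rw [hfrB r (c + 1) hb1, e2]; exact hQr r (c + 1) hc hc'
      by_cases hd1c : d + 1 = c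
      · subst hd1c
        have e1 : S' r d = S r d := hfrO r d (by omega) (by omega)
        by_cases hb2 : InBand i (S r (d + 1))
        · have e2 := hrwc r hc' hb2
          have hx := hbandc r hc' hb2
          have hold := hQr r d hc hc'
          rw [e1, e2]
          split_ifs <;> omega
        · rw [e1, hfrB r (d + 1) hb2]; exact hQr r d hc hc'
      · rw [hfrO r d hdc.symm hdc1, hfrO r (d + 1) hd1c (by omega)]; exact hQr r d hc hc'
  have hEval : ∀ r d, (r ≠ L ∨ (d ≠ c ∧ d ≠ c + 1)) → IsSkewCell lam mu r d →
      IsSkewCell lam mu (r + 1) d → (S' r d = S' (r + 1) d ↔ S r d = S (r + 1) d) := by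
    intro r d hrd hc hc'
    rcases eq_or_ne c d with rfl | hdc
    · have hrL : r ≠ L := by tauto
      by_cases hb1 : InBand i (S r c) <;> by_cases hb2 : InBand i (S (r + 1) c)
      · have e1 := hrwc r hc hb1
        have e2 := hrwc _ hc' hb2
        have h3 := hbandc r hc hb1
        have h4 := hbandc _ hc' hb2
        split_ifs at e1 e2 <;> omega
      · have e1 := hrwc r hc hb1
        have e2 := hfrB (r + 1) c hb2
        have h3 := hbandc r hc hb1
        have h4 := hQc r c hc hc'
        unfold InBand at hb2
        split_ifs at e1 <;> omega
      · have e2 := hrwc _ hc' hb2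
        have e1 := hfrB r c hb1
        have h4 := hbandc _ hc' hb2
        have h5 := hQc r c hc hc'
        unfold InBand at hb1
        split_ifs at e2 <;> omega
      · rw [hfrB r c hb1, hfrB (r + 1) c hb2]
    rcases eq_or_ne d (c + 1) with rfl | hdc1
    · have hrL : r ≠ L := by tauto
      by_cases hb1 : InBand i (S r (c + 1)) <;> by_cases hb2 : InBand i (S (r + 1) (c + 1))
      · have e1 := hrwc1 r hc hb1
        have e2 := hrwc1 _ hc' hb2
        have h3 := hbandc1 r hc hb1
        have h4 := hbandc1 _ hc' hb2
        split_ifs at h3 h4 <;> omega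
      · have e1 := hrwc1 r hc hb1
        have e2 := hfrB (r + 1) (c + 1) hb2
        have h3 := hbandc1 r hc hb1
        have h4 := hQc r (c + 1) hc hc'
        unfold InBand at hb2
        split_ifs at h3 <;> omega
      · have e2 := hrwc1 _ hc' hb2
        have e1 := hfrB r (c + 1) hb1
        have h3 := hbandc1 _ hc' hb2
        have h4 := hQc r (c + 1) hc hc'
        unfold InBand at hb1
        split_ifs at h3 <;> omega
      · rw [hfrB r (c + 1) hb1, hfrB (r + 1) (c + 1) hb2]
    · rw [hfrO r d hdc.symm hdc1, hfrO (r + 1) d hdc.symm hdc1]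
  refine ⟨hQ', Or.inr ⟨L, c, hLc, hLcell, ?_, ?_, ?_, ?_⟩⟩
  · exact fun r d hr => EPred_congr (hEval r d (Or.inl hr))
  · exact fun d h1 h2 => EPred_congr (hEval L d (Or.inr ⟨h1, h2⟩))
  · have e1 : S' L c = i := by rw [hrwc L hLc (Or.inr hvLc), if_pos le_rfl]
    have e2 : S' (L + 1) c = i + 1 := by
      rw [hrwc (L + 1) hL1c (Or.inr hvL1c), if_neg (by omega)]
    constructor
    · rintro ⟨-, -, hh⟩; rw [e1, e2] at hh; omega
    · rintro ⟨-, -, hh⟩; rw [hLval, hvL1c1] at hh; omega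
  · have e3 : S' L (c + 1) = i + 1 := hrwc1 L hLcell (Or.inl hLval)
    have e4 : S' (L + 1) (c + 1) = i + 1 := hrwc1 _ hL1c1 (Or.inr hvL1c1)
    exact iff_of_true ⟨hLcell, hL1c1, by rw [e3, e4]⟩ ⟨hLc, hL1c, by rw [hvLc, hvL1c]⟩

end StepDev

section StepDev2

variable {lam mu : YoungDiagram} {i : ℕ}

lemma stepM1_main {S S' : ℕ → ℕ → ℕ} {c : ℕ} (hQ : Qinv i lam mu S)
    (hs : StepM1 i lam mu S S' c) : Qinv i lam mu S' ∧ EDesc lam mu S S' := by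
  obtain ⟨hmx, hpl, ⟨r₀, hd1, hd2, hd3, hd4⟩, hframe, hrwc, hrwc1⟩ := hs
  obtain ⟨hQc, hQr⟩ := hQ
  have hfrO : ∀ r d, d ≠ c → d ≠ c + 1 → S' r d = S r d := fun r d h1 h2 =>
    hframe r d (Or.inl (by rintro (rfl | rfl); exacts [h1 rfl, h2 rfl]))
  have hfrB : ∀ r d, ¬ InBand i (S r d) → S' r d = S r d := fun r d h =>
    hframe r d (Or.inr fun hh => h hh.2)
  obtain ⟨⟨hLcell, hLval⟩, hLmax⟩ := lowestLow_spec (i := i) hmx.1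
  set L := lowestLow i lam mu S c with hLdef
  obtain ⟨r₂, h2c, h2v⟩ := colHasVal_iff.mp hmx.2
  have hLr₂ : L < r₂ := by
    by_contra hcon; push_neg at hcon
    have := val_mono hQc h2c hLcell hcon; omega
  have hL1c : IsSkewCell lam mu (L + 1) c := cell_between hLcell h2c (Nat.le_succ L) hLr₂
  have hvL1c : S (L + 1) c = i + 1 := by
    have hle := val_mono hQc hL1c h2c hLr₂
    have hge := hQc L c hLcell hL1c
    have hne : S (L + 1) c ≠ i := fun hh => by have := hLmax _ hL1c hh; omega
    omega
  have hr₀L : L < r₀ := by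
    by_contra hcon; push_neg at hcon
    have := val_mono hQc hd1 hLcell hcon; omega
  have hLc1 : IsSkewCell lam mu L (c + 1) := cell_right hd2 hLcell hr₀L.le
  have hvLc1 : S L (c + 1) = i := by
    have h1 := val_mono hQc hLc1 hd2 hr₀L.le
    rcases hQr L c hLcell hLc1 with h | h <;> omega
  have hL1c1 : IsSkewCell lam mu (L + 1) (c + 1) := cell_between hLc1 hd2 (Nat.le_succ L) hr₀L
  have hvL1c1 : S (L + 1) (c + 1) = i := by
    have h1 := val_mono hQc hL1c1 hd2 hr₀L
    have h2 := hQc L (c + 1) hLc1 hL1c1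
    omega
  have hno1 : ∀ r, IsSkewCell lam mu r (c + 1) → S r (c + 1) ≠ i + 1 := fun r hc hv =>
    hpl.2 (colHasVal_iff.mpr ⟨r, hc, hv⟩)
  have hbandc1 : ∀ r, IsSkewCell lam mu r (c + 1) → InBand i (S r (c + 1)) →
      S r (c + 1) = i := by
    intro r hc hb
    rcases hb with h | h
    · exact h
    · exact absurd h (hno1 r hc)
  have hbandc : ∀ r, IsSkewCell lam mu r c → InBand i (S r c) →
      S r c = if r ≤ L then i else i + 1 := by
    intro r hc hb
    split_ifs with hr
    · have := val_mono hQc hc hLcell hr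
      rcases hb with h | h
      · exact h
      · omega
    · rcases hb with h | h
      · exact absurd (hLmax r hc h) hr
      · exact h
  have hQ' : Qinv i lam mu S' := by
    constructor
    · intro r d hc hc'
      rcases eq_or_ne c d with rfl | hdc
      · by_cases hb1 : InBand i (S r c) <;> by_cases hb2 : InBand i (S (r + 1) c)
        · rw [hrwc r hc hb1, hrwc _ hc' hb2]
        · have e1 := hrwc r hc hb1
          have e2 := hfrB (r + 1) c hb2
          have h3 := hbandc r hc hb1
          have h4 := hQc r c hc hc'
          unfold InBand at hb2
          split_ifs at h3 <;> omega
        · have e2 := hrwc _ hc' hb2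
          have e1 := hfrB r c hb1
          have h3 := hbandc _ hc' hb2
          have h4 := hQc r c hc hc'
          unfold InBand at hb1
          split_ifs at h3 <;> omega
        · rw [hfrB r c hb1, hfrB (r + 1) c hb2]; exact hQc r c hc hc'
      rcases eq_or_ne d (c + 1) with rfl | hdc1
      · by_cases hb1 : InBand i (S r (c + 1)) <;> by_cases hb2 : InBand i (S (r + 1) (c + 1))
        · rw [hrwc1 r hc hb1, hrwc1 _ hc' hb2]; split_ifs <;> omega
        · have e1 := hrwc1 r hc hb1
          have e2 := hfrB (r + 1) (c + 1) hb2
          have h3 := hbandc1 r hc hb1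
          have h4 := hQc r (c + 1) hc hc'
          unfold InBand at hb2
          split_ifs at e1 <;> omega
        · have e2 := hrwc1 _ hc' hb2
          have e1 := hfrB r (c + 1) hb1
          have h3 := hbandc1 _ hc' hb2
          have h4 := hQc r (c + 1) hc hc'
          unfold InBand at hb1
          split_ifs at e2 <;> omega
        · rw [hfrB r (c + 1) hb1, hfrB (r + 1) (c + 1) hb2]; exact hQc r (c + 1) hc hc'
      · rw [hfrO r d hdc.symm hdc1, hfrO (r + 1) d hdc.symm hdc1]; exact hQc r d hc hc'
    · intro r d hc hc'
      rcases eq_or_ne c d with rfl | hdc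
      · by_cases hb1 : InBand i (S r c)
        · have e1 := hrwc r hc hb1
          have hx := hbandc r hc hb1
          by_cases hb2 : InBand i (S r (c + 1))
          · have e2 := hrwc1 r hc' hb2
            left; split_ifs at e2 <;> omega
          · have e2 := hfrB r (c + 1) hb2
            have hold := hQr r c hc hc'
            unfold InBand at hb2
            left; split_ifs at hx <;> omega
        · have e1 := hfrB r c hb1
          by_cases hb2 : InBand i (S r (c + 1))
          · have e2 := hrwc1 r hc' hb2
            have h3 := hbandc1 r hc' hb2
            have hold := hQr r c hc hc'
            unfold InBand at hb1
            left; split_ifs at e2 <;> omega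
          · rw [e1, hfrB r (c + 1) hb2]; exact hQr r c hc hc'
      rcases eq_or_ne d (c + 1) with rfl | hdc1
      · have e2 : S' r (c + 1 + 1) = S r (c + 1 + 1) := hfrO r (c + 2) (by omega) (by omega)
        by_cases hb1 : InBand i (S r (c + 1))
        · have e1 := hrwc1 r hc hb1
          have hold := hQr r (c + 1) hc hc'
          have hx := hbandc1 r hc hb1
          rw [e1, e2]
          split_ifs <;> omega
        · rw [hfrB r (c + 1) hb1, e2]; exact hQr r (c + 1) hc hc'
      by_cases hd1c : d + 1 = c
      · subst hd1c
        have e1 : S' r d = S r d := hfrO r d (by omega) (by omega)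
        by_cases hb2 : InBand i (S r (d + 1))
        · have e2 := hrwc r hc' hb2
          have hx := hbandc r hc' hb2
          have hold := hQr r d hc hc'
          rw [e1, e2]
          split_ifs at hx <;> omega
        · rw [e1, hfrB r (d + 1) hb2]; exact hQr r d hc hc'
      · rw [hfrO r d hdc.symm hdc1, hfrO r (d + 1) hd1c (by omega)]; exact hQr r d hc hc'
  have hEval : ∀ r d, (r ≠ L ∨ (d ≠ c ∧ d ≠ c + 1)) → IsSkewCell lam mu r d →
      IsSkewCell lam mu (r + 1) d → (S' r d = S' (r + 1) d ↔ S r d = S (r + 1) d) := by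
    intro r d hrd hc hc'
    rcases eq_or_ne c d with rfl | hdc
    · have hrL : r ≠ L := by tauto
      by_cases hb1 : InBand i (S r c) <;> by_cases hb2 : InBand i (S (r + 1) c)
      · have e1 := hrwc r hc hb1
        have e2 := hrwc _ hc' hb2
        have h3 := hbandc r hc hb1
        have h4 := hbandc _ hc' hb2
        split_ifs at h3 h4 <;> omega
      · have e1 := hrwc r hc hb1
        have e2 := hfrB (r + 1) c hb2
        have h3 := hbandc r hc hb1
        have h4 := hQc r c hc hc'
        unfold InBand at hb2
        split_ifs at h3 <;> omega
      · have e2 := hrwc _ hc' hb2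
        have e1 := hfrB r c hb1
        have h4 := hbandc _ hc' hb2
        have h5 := hQc r c hc hc'
        unfold InBand at hb1
        split_ifs at h4 <;> omega
      · rw [hfrB r c hb1, hfrB (r + 1) c hb2]
    rcases eq_or_ne d (c + 1) with rfl | hdc1
    · have hrL : r ≠ L := by tauto
      by_cases hb1 : InBand i (S r (c + 1)) <;> by_cases hb2 : InBand i (S (r + 1) (c + 1))
      · have e1 := hrwc1 r hc hb1
        have e2 := hrwc1 _ hc' hb2
        have h3 := hbandc1 r hc hb1
        have h4 := hbandc1 _ hc' hb2
        split_ifs at e1 e2 <;> omega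
      · have e1 := hrwc1 r hc hb1
        have e2 := hfrB (r + 1) (c + 1) hb2
        have h3 := hbandc1 r hc hb1
        have h4 := hQc r (c + 1) hc hc'
        unfold InBand at hb2
        split_ifs at e1 <;> omega
      · have e2 := hrwc1 _ hc' hb2
        have e1 := hfrB r (c + 1) hb1
        have h3 := hbandc1 _ hc' hb2
        have h4 := hQc r (c + 1) hc hc'
        unfold InBand at hb1
        split_ifs at e2 <;> omega
      · rw [hfrB r (c + 1) hb1, hfrB (r + 1) (c + 1) hb2]
    · rw [hfrO r d hdc.symm hdc1, hfrO (r + 1) d hdc.symm hdc1]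
  refine ⟨hQ', Or.inr ⟨L, c, hLcell, hLc1, ?_, ?_, ?_, ?_⟩⟩
  · exact fun r d hr => EPred_congr (hEval r d (Or.inl hr))
  · exact fun d h1 h2 => EPred_congr (hEval L d (Or.inr ⟨h1, h2⟩))
  · have e1 : S' L c = i := hrwc L hLcell (Or.inl hLval)
    have e2 : S' (L + 1) c = i := hrwc (L + 1) hL1c (Or.inr hvL1c)
    exact iff_of_true ⟨hLcell, hL1c, by rw [e1, e2]⟩ ⟨hLc1, hL1c1, by rw [hvLc1, hvL1c1]⟩
  · have e3 : S' L (c + 1) = i := by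
      rw [hrwc1 L hLc1 (Or.inl hvLc1), if_pos le_rfl]
    have e4 : S' (L + 1) (c + 1) = i + 1 := by
      rw [hrwc1 _ hL1c1 (Or.inl hvL1c1), if_neg (by omega)]
    constructor
    · rintro ⟨-, -, hh⟩; rw [e3, e4] at hh; omega
    · rintro ⟨-, -, hh⟩; rw [hLval, hvL1c] at hh; omega

lemma step21_main {S S' : ℕ → ℕ → ℕ} {c : ℕ} (hQ : Qinv i lam mu S)
    (hs : Step21 i lam mu S S' c) : Qinv i lam mu S' ∧ EDesc lam mu S S' := by
  obtain ⟨hph, hpl, ⟨r₀, hd1, hd2, hd3, hd4⟩, hframe, hrwc, hrwc1⟩ := hs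
  obtain ⟨hQc, hQr⟩ := hQ
  have hfrO : ∀ r d, d ≠ c → d ≠ c + 1 → S' r d = S r d := fun r d h1 h2 =>
    hframe r d (Or.inl (by rintro (rfl | rfl); exacts [h1 rfl, h2 rfl]))
  have hfrB : ∀ r d, ¬ InBand i (S r d) → S' r d = S r d := fun r d h =>
    hframe r d (Or.inr fun hh => h hh.2)
  have hnoi : ∀ r, IsSkewCell lam mu r c → S r c ≠ i := fun r hc hv =>
    hph.2 (colHasVal_iff.mpr ⟨r, hc, hv⟩)
  have hno1 : ∀ r, IsSkewCell lam mu r (c + 1) → S r (c + 1) ≠ i + 1 := fun r hc hv =>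
    hpl.2 (colHasVal_iff.mpr ⟨r, hc, hv⟩)
  have hbandc : ∀ r, IsSkewCell lam mu r c → InBand i (S r c) → S r c = i + 1 := by
    intro r hc hb
    rcases hb with h | h
    · exact absurd h (hnoi r hc)
    · exact h
  have hbandc1 : ∀ r, IsSkewCell lam mu r (c + 1) → InBand i (S r (c + 1)) →
      S r (c + 1) = i := by
    intro r hc hb
    rcases hb with h | h
    · exact h
    · exact absurd h (hno1 r hc)
  have hQ' : Qinv i lam mu S' := by
    constructor
    · intro r d hc hc'
      rcases eq_or_ne c d with rfl | hdc
      · by_cases hb1 : InBand i (S r c) <;> by_cases hb2 : InBand i (S (r + 1) c)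
        · rw [hrwc r hc hb1, hrwc _ hc' hb2]
        · have e1 := hrwc r hc hb1
          have e2 := hfrB (r + 1) c hb2
          have h3 := hbandc r hc hb1
          have h4 := hQc r c hc hc'
          unfold InBand at hb2
          omega
        · have e2 := hrwc _ hc' hb2
          have e1 := hfrB r c hb1
          have h3 := hbandc _ hc' hb2
          have h4 := hQc r c hc hc'
          unfold InBand at hb1
          omega
        · rw [hfrB r c hb1, hfrB (r + 1) c hb2]; exact hQc r c hc hc'
      rcases eq_or_ne d (c + 1) with rfl | hdc1
      · by_cases hb1 : InBand i (S r (c + 1)) <;> by_cases hb2 : InBand i (S (r + 1) (c + 1))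
        · rw [hrwc1 r hc hb1, hrwc1 _ hc' hb2]
        · have e1 := hrwc1 r hc hb1
          have e2 := hfrB (r + 1) (c + 1) hb2
          have h3 := hbandc1 r hc hb1
          have h4 := hQc r (c + 1) hc hc'
          unfold InBand at hb2
          omega
        · have e2 := hrwc1 _ hc' hb2
          have e1 := hfrB r (c + 1) hb1
          have h3 := hbandc1 _ hc' hb2
          have h4 := hQc r (c + 1) hc hc'
          unfold InBand at hb1
          omega
        · rw [hfrB r (c + 1) hb1, hfrB (r + 1) (c + 1) hb2]; exact hQc r (c + 1) hc hc'
      · rw [hfrO r d hdc.symm hdc1, hfrO (r + 1) d hdc.symm hdc1]; exact hQc r d hc hc'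
    · intro r d hc hc'
      rcases eq_or_ne c d with rfl | hdc
      · by_cases hb1 : InBand i (S r c)
        · have e1 := hrwc r hc hb1
          have hx := hbandc r hc hb1
          by_cases hb2 : InBand i (S r (c + 1))
          · have e2 := hrwc1 r hc' hb2
            left; omega
          · have e2 := hfrB r (c + 1) hb2
            have hold := hQr r c hc hc'
            unfold InBand at hb2
            left; omega
        · have e1 := hfrB r c hb1
          by_cases hb2 : InBand i (S r (c + 1))
          · have e2 := hrwc1 r hc' hb2
            have h3 := hbandc1 r hc' hb2
            have hold := hQr r c hc hc'
            unfold InBand at hb1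
            left; omega
          · rw [e1, hfrB r (c + 1) hb2]; exact hQr r c hc hc'
      rcases eq_or_ne d (c + 1) with rfl | hdc1
      · have e2 : S' r (c + 1 + 1) = S r (c + 1 + 1) := hfrO r (c + 2) (by omega) (by omega)
        by_cases hb1 : InBand i (S r (c + 1))
        · have e1 := hrwc1 r hc hb1
          have hold := hQr r (c + 1) hc hc'
          have hx := hbandc1 r hc hb1
          rw [e1, e2]
          omega
        · rw [hfrB r (c + 1) hb1, e2]; exact hQr r (c + 1) hc hc'
      by_cases hd1c : d + 1 = c
      · subst hd1c
        have e1 : S' r d = S r d := hfrO r d (by omega) (by omega)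
        by_cases hb2 : InBand i (S r (d + 1))
        · have e2 := hrwc r hc' hb2
          have hx := hbandc r hc' hb2
          have hold := hQr r d hc hc'
          rw [e1, e2]
          omega
        · rw [e1, hfrB r (d + 1) hb2]; exact hQr r d hc hc'
      · rw [hfrO r d hdc.symm hdc1, hfrO r (d + 1) hd1c (by omega)]; exact hQr r d hc hc'
  refine ⟨hQ', Or.inl fun r d => EPred_congr fun hc hc' => ?_⟩
  rcases eq_or_ne c d with rfl | hdc
  · by_cases hb1 : InBand i (S r c) <;> by_cases hb2 : InBand i (S (r + 1) c)
    · have e1 := hrwc r hc hb1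
      have e2 := hrwc _ hc' hb2
      have h3 := hbandc r hc hb1
      have h4 := hbandc _ hc' hb2
      omega
    · have e1 := hrwc r hc hb1
      have e2 := hfrB (r + 1) c hb2
      have h3 := hbandc r hc hb1
      have h4 := hQc r c hc hc'
      unfold InBand at hb2
      omega
    · have e2 := hrwc _ hc' hb2
      have e1 := hfrB r c hb1
      have h4 := hbandc _ hc' hb2
      have h5 := hQc r c hc hc'
      unfold InBand at hb1
      omega
    · rw [hfrB r c hb1, hfrB (r + 1) c hb2]
  rcases eq_or_ne d (c + 1) with rfl | hdc1
  · by_cases hb1 : InBand i (S r (c + 1)) <;> by_cases hb2 : InBand i (S (r + 1) (c + 1))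
    · have e1 := hrwc1 r hc hb1
      have e2 := hrwc1 _ hc' hb2
      have h3 := hbandc1 r hc hb1
      have h4 := hbandc1 _ hc' hb2
      omega
    · have e1 := hrwc1 r hc hb1
      have e2 := hfrB (r + 1) (c + 1) hb2
      have h3 := hbandc1 r hc hb1
      have h4 := hQc r (c + 1) hc hc'
      unfold InBand at hb2
      omega
    · have e2 := hrwc1 _ hc' hb2
      have e1 := hfrB r (c + 1) hb1
      have h3 := hbandc1 _ hc' hb2
      have h4 := hQc r (c + 1) hc hc'
      unfold InBand at hb1
      omega
    · rw [hfrB r (c + 1) hb1, hfrB (r + 1) (c + 1) hb2]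
  · rw [hfrO r d hdc.symm hdc1, hfrO (r + 1) d hdc.symm hdc1]

lemma drstep_main {S S' : ℕ → ℕ → ℕ} (hQ : Qinv i lam mu S) (h : DRStep i lam mu S S') :
    Qinv i lam mu S' ∧ EDesc lam mu S S' := by
  obtain ⟨c, h | h | h⟩ := h
  exacts [step2M_main hQ h, stepM1_main hQ h, step21_main hQ h]

end StepDev2

section CongrDev

variable {lam mu : YoungDiagram} {i : ℕ}

lemma bool_of_iff {a b : Bool} (h : (a = true) ↔ (b = true)) : a = b := by
  cases a <;> cases b <;> simp_all

lemma hpred_iff {S : ℕ → ℕ → ℕ} {r d : ℕ} :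
    ((decide (IsSkewCell lam mu r d) &&
      !(decide (IsSkewCell lam mu (r + 1) d) && decide (S (r + 1) d = S r d))) = true)
    ↔ (IsSkewCell lam mu r d ∧ ¬ EPred lam mu S r d) := by
  have he : (S (r + 1) d = S r d) ↔ (S r d = S (r + 1) d) := eq_comm
  by_cases h1 : IsSkewCell lam mu r d <;> by_cases h2 : IsSkewCell lam mu (r + 1) d <;>
    by_cases h3 : S r d = S (r + 1) d <;> simp [EPred, h1, h2, h3, he]

lemma countP_range_swap (p q : ℕ → Bool) (n c : ℕ) (hc : c + 1 < n)
    (h0 : ∀ d, d ≠ c → d ≠ c + 1 → q d = p d) (h1 : q c = p (c + 1)) (h2 : q (c + 1) = p c) :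
    (List.range n).countP q = (List.range n).countP p := by
  induction n with
  | zero => simp
  | succ n ih =>
    rcases Nat.lt_or_ge (c + 1) n with h | h
    · rw [List.range_succ, List.countP_append, List.countP_append, ih h]
      have he : q n = p n := h0 n (by omega) (by omega)
      simp [List.countP_cons, he]
    · have hn : n = c + 1 := by omega
      subst hn
      rw [List.range_succ, List.range_succ, List.countP_append, List.countP_append,
        List.countP_append, List.countP_append]
      have h3 : List.countP q (List.range c) = List.countP p (List.range c) := by
        apply List.countP_congr
        intro x hx
        rw [h0 x (by simpa using (List.mem_range.mp hx).ne) (by have := List.mem_range.mp hx; omega)]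
      simp only [List.countP_cons, List.countP_nil, h3, h1, h2]
      cases hpc : p c <;> cases hpc1 : p (c + 1) <;> simp <;> omega

lemma heightWord_congr {S S' : ℕ → ℕ → ℕ} (h : EDesc lam mu S S') :
    heightWord lam mu S' = heightWord lam mu S := by
  unfold heightWord
  congr 1
  funext r
  rw [List.map_const', List.map_const']
  congr 1
  rw [← List.countP_eq_length_filter, ← List.countP_eq_length_filter]
  rcases h with h | ⟨ρ, c, hcc, hcc1, hoff, hoffd, hswc, hswc1⟩
  · apply List.countP_congr
    intro d _
    rw [hpred_iff, hpred_iff]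
    exact and_congr_right fun _ => not_congr (h r d)
  · by_cases hr : r = ρ
    · subst hr
      have hb : c + 1 < lam.rowLen r :=
        YoungDiagram.mem_iff_lt_rowLen.mp ((YoungDiagram.mem_cells _).mp hcc1.1)
      apply countP_range_swap _ _ _ c hb
      · intro d hd1 hd2
        apply bool_of_iff
        rw [hpred_iff, hpred_iff]
        exact and_congr_right fun _ => not_congr (hoffd d hd1 hd2)
      · apply bool_of_iff
        rw [hpred_iff, hpred_iff]
        constructor
        · rintro ⟨-, h2⟩; exact ⟨hcc1, fun hE => h2 (hswc.mpr hE)⟩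
        · rintro ⟨-, h2⟩; exact ⟨hcc, fun hE => h2 (hswc.mp hE)⟩
      · apply bool_of_iff
        rw [hpred_iff, hpred_iff]
        constructor
        · rintro ⟨-, h2⟩; exact ⟨hcc, fun hE => h2 (hswc1.mpr hE)⟩
        · rintro ⟨-, h2⟩; exact ⟨hcc1, fun hE => h2 (hswc1.mp hE)⟩
    · apply List.countP_congr
      intro d _
      rw [hpred_iff, hpred_iff]
      exact and_congr_right fun _ => not_congr (hoff r d hr)

lemma ceqF_congr {S S' : ℕ → ℕ → ℕ} (h : EDesc lam mu S S') :
    ceqF lam mu S' = ceqF lam mu S := by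
  funext k
  cases k with
  | zero => rfl
  | succ k =>
    show Nat.card {d : ℕ // EPred lam mu S' k d} = Nat.card {d : ℕ // EPred lam mu S k d}
    rcases h with h | ⟨ρ, c, hcc, hcc1, hoff, hoffd, hswc, hswc1⟩
    · exact Nat.card_congr (Equiv.subtypeEquivRight fun d => h k d)
    · by_cases hk : k = ρ
      · subst hk
        refine Nat.card_congr (Equiv.subtypeEquiv (Equiv.swap c (c + 1)) fun d => ?_)
        rcases eq_or_ne d c with rfl | hdc
        · rw [Equiv.swap_apply_left]; exact hswc
        rcases eq_or_ne d (c + 1) with rfl | hdc1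
        · rw [Equiv.swap_apply_right]; exact hswc1
        · rw [Equiv.swap_apply_of_ne_of_ne hdc hdc1]; exact hoffd d hdc hdc1
      · exact Nat.card_congr (Equiv.subtypeEquivRight fun d => hoff k d hk)

lemma chain_main {S T' : ℕ → ℕ → ℕ} (hQ : Qinv i lam mu S)
    (h : Relation.ReflTransGen (DRStep i lam mu) S T') :
    heightWord lam mu T' = heightWord lam mu S ∧ ceqF lam mu T' = ceqF lam mu S := by
  have key : Qinv i lam mu T' ∧ heightWord lam mu T' = heightWord lam mu S ∧
      ceqF lam mu T' = ceqF lam mu S := by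
    induction h with
    | refl => exact ⟨hQ, rfl, rfl⟩
    | tail hab hbc ih =>
      obtain ⟨hQb, hhw, hcq⟩ := ih
      obtain ⟨hQc, hED⟩ := drstep_main hQb hbc
      exact ⟨hQc, (heightWord_congr hED).trans hhw, (ceqF_congr hED).trans hcq⟩
  exact ⟨key.2.1, key.2.2⟩

end CongrDev

section FinalDev

variable {lam mu : YoungDiagram} {i m : ℕ}

lemma raise_main {T : ℕ → ℕ → ℕ} {c : ℕ} (hT : IsSkewRPP lam mu m T)
    (hp : IsPureLow i lam mu T c) :
    Qinv i lam mu (raiseCol i lam mu T c) ∧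
    (∀ r d, EPred lam mu (raiseCol i lam mu T c) r d ↔ EPred lam mu T r d) := by
  obtain ⟨h0, hbound, hrow, hcol⟩ := hT
  have hno1 : ∀ r, IsSkewCell lam mu r c → T r c ≠ i + 1 := fun r hc hv =>
    hp.2 (colHasVal_iff.mpr ⟨r, hc, hv⟩)
  have hval : ∀ r d, raiseCol i lam mu T c r d =
      if d = c ∧ IsSkewCell lam mu r d ∧ T r d = i then i + 1 else T r d := fun r d => rfl
  have hvo : ∀ r d, d ≠ c → raiseCol i lam mu T c r d = T r d := by
    intro r d hd; rw [hval, if_neg (by tauto)]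
  have hvc : ∀ r, IsSkewCell lam mu r c →
      raiseCol i lam mu T c r c = if T r c = i then i + 1 else T r c := by
    intro r hc; rw [hval]
    by_cases h : T r c = i
    · rw [if_pos ⟨rfl, hc, h⟩, if_pos h]
    · rw [if_neg (by tauto), if_neg h]
  refine ⟨⟨?_, ?_⟩, ?_⟩
  · intro r d hc hc'
    rcases eq_or_ne c d with rfl | hdc
    · rw [hvc r hc, hvc _ hc']
      have h1 := hcol r c hc hc'
      have h2 := hno1 r hc
      have h3 := hno1 _ hc'
      split_ifs <;> omega
    · rw [hvo r d hdc.symm, hvo _ d hdc.symm]; exact hcol r d hc hc'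
  · intro r d hc hc'
    rcases eq_or_ne c d with rfl | hdc
    · rw [hvc r hc, hvo r (c + 1) (by omega)]
      have h1 := hrow r c hc hc'
      split_ifs <;> omega
    by_cases hd1c : d + 1 = c
    · subst hd1c
      rw [hvo r d (by omega), hvc r hc']
      have h1 := hrow r d hc hc'
      split_ifs <;> omega
    · rw [hvo r d hdc.symm, hvo r (d + 1) hd1c]; exact Or.inl (hrow r d hc hc')
  · intro r d
    refine EPred_congr fun hc hc' => ?_
    rcases eq_or_ne c d with rfl | hdc
    · rw [hvc r hc, hvc _ hc']
      have h1 := hcol r c hc hc'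
      have h2 := hno1 r hc
      have h3 := hno1 _ hc'
      split_ifs <;> omega
    · rw [hvo r d hdc.symm, hvo _ d hdc.symm]

lemma lower_main {T : ℕ → ℕ → ℕ} {c : ℕ} (hT : IsSkewRPP lam mu m T)
    (hp : IsPureHigh i lam mu T c) :
    Qinv i lam mu (lowerCol i lam mu T c) ∧
    (∀ r d, EPred lam mu (lowerCol i lam mu T c) r d ↔ EPred lam mu T r d) := by
  obtain ⟨h0, hbound, hrow, hcol⟩ := hT
  have hnoi : ∀ r, IsSkewCell lam mu r c → T r c ≠ i := fun r hc hv =>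
    hp.2 (colHasVal_iff.mpr ⟨r, hc, hv⟩)
  have hval : ∀ r d, lowerCol i lam mu T c r d =
      if d = c ∧ IsSkewCell lam mu r d ∧ T r d = i + 1 then i else T r d := fun r d => rfl
  have hvo : ∀ r d, d ≠ c → lowerCol i lam mu T c r d = T r d := by
    intro r d hd; rw [hval, if_neg (by tauto)]
  have hvc : ∀ r, IsSkewCell lam mu r c →
      lowerCol i lam mu T c r c = if T r c = i + 1 then i else T r c := by
    intro r hc; rw [hval]
    by_cases h : T r c = i + 1
    · rw [if_pos ⟨rfl, hc, h⟩, if_pos h]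
    · rw [if_neg (by tauto), if_neg h]
  refine ⟨⟨?_, ?_⟩, ?_⟩
  · intro r d hc hc'
    rcases eq_or_ne c d with rfl | hdc
    · rw [hvc r hc, hvc _ hc']
      have h1 := hcol r c hc hc'
      have h2 := hnoi r hc
      have h3 := hnoi _ hc'
      split_ifs <;> omega
    · rw [hvo r d hdc.symm, hvo _ d hdc.symm]; exact hcol r d hc hc'
  · intro r d hc hc'
    rcases eq_or_ne c d with rfl | hdc
    · rw [hvc r hc, hvo r (c + 1) (by omega)]
      have h1 := hrow r c hc hc'
      split_ifs <;> omega
    by_cases hd1c : d + 1 = c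
    · subst hd1c
      rw [hvo r d (by omega), hvc r hc']
      have h1 := hrow r d hc hc'
      split_ifs <;> omega
    · rw [hvo r d hdc.symm, hvo r (d + 1) hd1c]; exact Or.inl (hrow r d hc hc')
  · intro r d
    refine EPred_congr fun hc hc' => ?_
    rcases eq_or_ne c d with rfl | hdc
    · rw [hvc r hc, hvc _ hc']
      have h1 := hcol r c hc hc'
      have h2 := hnoi r hc
      have h3 := hnoi _ hc'
      split_ifs <;> omega
    · rw [hvo r d hdc.symm, hvo _ d hdc.symm]

lemma fi_pure {T : ℕ → ℕ → ℕ} {p c : ℕ}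
    (h1 : (unmatchedCloses i (colWord i lam mu T)).getLast? = some p)
    (h2 : (pureCols i lam mu T)[p]? = some c) : IsPureLow i lam mu T c := by
  have hp := List.mem_of_getLast? h1
  unfold unmatchedCloses at hp
  rw [List.mem_filter] at hp
  have hU : IsUnmatchedClose i (colWord i lam mu T) p := of_decide_eq_true hp.2
  have hw := hU.1
  unfold colWord at hw
  rw [List.getElem?_map, h2] at hw
  simp only [Option.map_some] at hw
  have hfc := Option.some.inj hw
  by_cases hP : IsPureLow i lam mu T c
  · exact hP
  · rw [if_neg hP] at hfc; omega

lemma ei_pure {T : ℕ → ℕ → ℕ} {p c : ℕ}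
    (h1 : (unmatchedOpens i (colWord i lam mu T)).head? = some p)
    (h2 : (pureCols i lam mu T)[p]? = some c) : IsPureHigh i lam mu T c := by
  obtain ⟨ys, hys⟩ := List.head?_eq_some_iff.mp h1
  have hp : p ∈ unmatchedOpens i (colWord i lam mu T) := by
    rw [hys]; exact List.mem_cons_self
  unfold unmatchedOpens at hp
  rw [List.mem_filter] at hp
  have hU : IsUnmatchedOpen i (colWord i lam mu T) p := of_decide_eq_true hp.2
  have hw := hU.1
  unfold colWord at hw
  rw [List.getElem?_map, h2] at hw
  simp only [Option.map_some] at hw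
  have hfc := Option.some.inj hw
  have hmem : c ∈ pureCols i lam mu T := List.mem_of_getElem? h2
  unfold pureCols at hmem
  rw [List.mem_filter] at hmem
  have hor : IsPureLow i lam mu T c ∨ IsPureHigh i lam mu T c := by
    have := hmem.2
    rcases Bool.or_eq_true_iff.mp this with h | h
    · exact Or.inl (of_decide_eq_true h)
    · exact Or.inr (of_decide_eq_true h)
  rcases hor with hP | hP
  · rw [if_pos hP] at hfc; omega
  · exact hP

end FinalDev

/-- Every descent-resolution step applied to a benign tableau preserves the
height vector; consequently, whenever `f_i(T) ≠ 0` (resp. `e_i(T) ≠ 0`), the operator `f_i`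
(resp. `e_i`) preserves both the height vector and the `ceq` statistic. -/
theorem heights_and_ceq_preserved (lam mu : YoungDiagram) (hsub : mu ≤ lam)
    (m : ℕ) (hm : 2 ≤ m) (i : ℕ) (hi : 1 ≤ i) (him : i < m) :
    (∀ T T', IsBenign i lam mu T → DRStep i lam mu T T' →
      heightWord lam mu T' = heightWord lam mu T) ∧
    (∀ T T', IsSkewRPP lam mu m T → fiRel i lam mu T T' →
      heightWord lam mu T' = heightWord lam mu T ∧ ceqF lam mu T' = ceqF lam mu T) ∧
    (∀ T T', IsSkewRPP lam mu m T → eiRel i lam mu T T' →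
      heightWord lam mu T' = heightWord lam mu T ∧ ceqF lam mu T' = ceqF lam mu T) := by
  refine ⟨?_, ?_, ?_⟩
  · intro T T' hben hstep
    have hQ : Qinv i lam mu T := by
      refine ⟨hben.2.2.1, fun r d hc hc' => ?_⟩
      have h1 := hben.2.1 r d hc
      have h2 := hben.2.1 r (d + 1) hc'
      omega
    exact heightWord_congr (drstep_main hQ hstep).2
  · intro T T' hrpp hfi
    obtain ⟨p, c, hlast, hget, hchain, -⟩ := hfi
    have hpure := fi_pure hlast hget
    obtain ⟨hQ, hE⟩ := raise_main hrpp hpure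
    obtain ⟨hh, hc⟩ := chain_main hQ hchain
    have hED : EDesc lam mu T (raiseCol i lam mu T c) := Or.inl hE
    exact ⟨hh.trans (heightWord_congr hED), hc.trans (ceqF_congr hED)⟩
  · intro T T' hrpp hei
    obtain ⟨p, c, hhead, hget, hchain, -⟩ := hei
    have hpure := ei_pure hhead hget
    obtain ⟨hQ, hE⟩ := lower_main hrpp hpure
    obtain ⟨hh, hc⟩ := chain_main hQ hchain
    have hED : EDesc lam mu T (lowerCol i lam mu T c) := Or.inl hE
    exact ⟨hh.trans (heightWord_congr hED), hc.trans (ceqF_congr hED)⟩
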